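/- There do not exist permutations c_1, c_2, c_3, c_4 of Fin 5, each of cycle type {2,2}, with c_1 c_2 c_3 c_4 = 1, generating the alternating group A_5; and there do not exist permutations c_1, c_2 of cycle type {2,2} and c_3 of cycle type {5} with c_1 c_2 c_3 = 1 generating A_5. (This is the generating-vector content of Theorem 3.10(5a): a 5-fold covering of ℙ¹ with only even branch values, at least one of type [2,2,1], none of type [3,1,1], and ramification degree exactly 8 has monodromy group D_5, not A_5.) -/

import Mathlib

open Equiv

/-- The 15 double transpositions in `Perm (Fin 5)`. -/
private def dtL : List (Perm (Fin 5)) :=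
  [swap 0 1 * swap 2 3, swap 0 2 * swap 1 3, swap 0 3 * swap 1 2,
   swap 0 1 * swap 2 4, swap 0 2 * swap 1 4, swap 0 4 * swap 1 2,
   swap 0 1 * swap 3 4, swap 0 3 * swap 1 4, swap 0 4 * swap 1 3,
   swap 0 2 * swap 3 4, swap 0 3 * swap 2 4, swap 0 4 * swap 2 3,
   swap 1 2 * swap 3 4, swap 1 3 * swap 2 4, swap 1 4 * swap 2 3]

set_option maxRecDepth 100000 in
private lemma mem_dtL : ∀ a : Perm (Fin 5), a * a = 1 → a.support.card = 4 → a ∈ dtL := by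
  decide

set_option maxRecDepth 100000 in
set_option maxHeartbeats 4000000 in
private lemma aux_commute : ∀ i j k : Fin dtL.length,
    (dtL.get i * dtL.get j * dtL.get k) * (dtL.get i * dtL.get j * dtL.get k) = 1 →
    (dtL.get i * dtL.get j * dtL.get k).support.card = 4 →
    (dtL.get i * dtL.get j) * (dtL.get i * dtL.get k) =
      (dtL.get i * dtL.get k) * (dtL.get i * dtL.get j) := by decide

/-- Key finite check: if `a, b, c` and `a*b*c` are all double transpositions,
then `a*b` and `a*c` commute. -/
private lemma key_commute (a b c : Perm (Fin 5))
    (ha : a * a = 1) (ha4 : a.support.card = 4)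
    (hb : b * b = 1) (hb4 : b.support.card = 4)
    (hc : c * c = 1) (hc4 : c.support.card = 4)
    (hd : (a * b * c) * (a * b * c) = 1) (hd4 : (a * b * c).support.card = 4) :
    (a * b) * (a * c) = (a * c) * (a * b) := by
  obtain ⟨i, hi⟩ := List.get_of_mem (mem_dtL a ha ha4)
  obtain ⟨j, hj⟩ := List.get_of_mem (mem_dtL b hb hb4)
  obtain ⟨k, hk⟩ := List.get_of_mem (mem_dtL c hc hc4)
  subst hi hj hk
  exact aux_commute i j k hd hd4

private lemma sq_of_ct22 {σ : Perm (Fin 5)} (h : σ.cycleType = {2, 2}) : σ * σ = 1 := by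
  have h2 : orderOf σ = 2 := by
    rw [← Equiv.Perm.lcm_cycleType, h]; decide
  have := pow_orderOf_eq_one σ
  rwa [h2, pow_two] at this

private lemma supp_of_ct22 {σ : Perm (Fin 5)} (h : σ.cycleType = {2, 2}) :
    σ.support.card = 4 := by
  rw [← Equiv.Perm.sum_cycleType, h]; decide

private lemma memA5_of_ct22 {σ : Perm (Fin 5)} (h : σ.cycleType = {2, 2}) :
    σ ∈ alternatingGroup (Fin 5) := by
  rw [Equiv.Perm.mem_alternatingGroup, Equiv.Perm.sign_of_cycleType, h]; decide

/-- Conjugation by an element that conjugates generators into the closure preserves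
the closure. -/
private lemma conj_mem_closure {G : Type*} [Group G] {S : Set G} (g : G)
    (hg : ∀ x ∈ S, g * x * g⁻¹ ∈ Subgroup.closure S) :
    ∀ x ∈ Subgroup.closure S, g * x * g⁻¹ ∈ Subgroup.closure S := by
  intro x hx
  induction hx using Subgroup.closure_induction with
  | mem x hx => exact hg x hx
  | one => simpa using one_mem _
  | mul x y hx hy ihx ihy =>
    have e : g * (x * y) * g⁻¹ = (g * x * g⁻¹) * (g * y * g⁻¹) := by group
    rw [e]; exact mul_mem ihx ihy
  | inv x hx ih =>
    have e : g * x⁻¹ * g⁻¹ = (g * x * g⁻¹)⁻¹ := by group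
    rw [e]; exact inv_mem ih

private lemma mem_normalizer_of_inv {G : Type*} [Group G] {g : G} (hg2 : g * g = 1)
    {R : Subgroup G} (h : ∀ x ∈ R, g * x * g⁻¹ ∈ R) : g ∈ Subgroup.normalizer (R : Set _) := by
  have hi : g⁻¹ = g := inv_eq_of_mul_eq_one_left hg2
  rw [Subgroup.mem_normalizer_iff]
  intro x
  constructor
  · exact h x
  · intro hx
    have h2 := h _ hx
    have e : g * (g * x * g⁻¹) * g⁻¹ = x := by
      rw [hi, ← mul_assoc, ← mul_assoc, hg2, one_mul, mul_assoc, hg2, mul_one]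
    rwa [e] at h2

/-- `A₅` is not contained in any abelian subgroup. -/
private lemma not_abelian (H : Subgroup (Perm (Fin 5)))
    (hle : alternatingGroup (Fin 5) ≤ H)
    (hcomm : ∀ x ∈ H, ∀ y ∈ H, x * y = y * x) : False := by
  have hx : (swap 0 1 * swap 2 3 : Perm (Fin 5)) ∈ alternatingGroup (Fin 5) := by
    rw [Equiv.Perm.mem_alternatingGroup]; decide
  have hy : (swap 0 1 * swap 2 4 : Perm (Fin 5)) ∈ alternatingGroup (Fin 5) := by
    rw [Equiv.Perm.mem_alternatingGroup]; decide
  have h := hcomm _ (hle hx) _ (hle hy)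
  have hne : (swap 0 1 * swap 2 3 : Perm (Fin 5)) * (swap 0 1 * swap 2 4) ≠
      (swap 0 1 * swap 2 4) * (swap 0 1 * swap 2 3) := by decide
  exact hne h

private lemma zpowers_comm {G : Type*} [Group G] (g : G) :
    ∀ x ∈ Subgroup.zpowers g, ∀ y ∈ Subgroup.zpowers g, x * y = y * x := by
  intro x hx y hy
  obtain ⟨m, rfl⟩ := hx
  obtain ⟨n, rfl⟩ := hy
  rw [← zpow_add, ← zpow_add, add_comm]

theorem no_degree_eight_generating_vectors_of_alternating :
    (¬ ∃ c₁ c₂ c₃ c₄ : Equiv.Perm (Fin 5),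
      c₁.cycleType = {2, 2} ∧ c₂.cycleType = {2, 2} ∧
      c₃.cycleType = {2, 2} ∧ c₄.cycleType = {2, 2} ∧
      c₁ * c₂ * c₃ * c₄ = 1 ∧
      Subgroup.closure ({c₁, c₂, c₃, c₄} : Set (Equiv.Perm (Fin 5))) =
        alternatingGroup (Fin 5)) ∧
    (¬ ∃ c₁ c₂ c₃ : Equiv.Perm (Fin 5),
      c₁.cycleType = {2, 2} ∧ c₂.cycleType = {2, 2} ∧ c₃.cycleType = {5} ∧
      c₁ * c₂ * c₃ = 1 ∧
      Subgroup.closure ({c₁, c₂, c₃} : Set (Equiv.Perm (Fin 5))) =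
        alternatingGroup (Fin 5)) := by
  constructor
  · -- four double transpositions
    rintro ⟨c₁, c₂, c₃, c₄, h1, h2, h3, h4, hp, hgen⟩
    have e1 := sq_of_ct22 h1
    have e2 := sq_of_ct22 h2
    have e3 := sq_of_ct22 h3
    have e4 := sq_of_ct22 h4
    have s1 := supp_of_ct22 h1
    have s2 := supp_of_ct22 h2
    have s3 := supp_of_ct22 h3
    have s4 := supp_of_ct22 h4
    have m1 := memA5_of_ct22 h1
    have m2 := memA5_of_ct22 h2
    have m3 := memA5_of_ct22 h3
    have i1 : c₁⁻¹ = c₁ := inv_eq_of_mul_eq_one_left e1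
    have i2 : c₂⁻¹ = c₂ := inv_eq_of_mul_eq_one_left e2
    have i3 : c₃⁻¹ = c₃ := inv_eq_of_mul_eq_one_left e3
    have hc4 : c₄ = (c₁ * c₂ * c₃)⁻¹ := by
      have h := inv_eq_of_mul_eq_one_left hp
      rw [← h, inv_inv]
    have hd2 : (c₁ * c₂ * c₃) * (c₁ * c₂ * c₃) = 1 := by
      rw [hc4] at e4
      have := congrArg (·⁻¹) e4
      simpa [mul_inv_rev] using this
    have hd4 : (c₁ * c₂ * c₃).support.card = 4 := by
      rw [hc4, Equiv.Perm.support_inv] at s4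
      exact s4
    have hcomm : (c₁ * c₂) * (c₁ * c₃) = (c₁ * c₃) * (c₁ * c₂) :=
      key_commute c₁ c₂ c₃ e1 s1 e2 s2 e3 s3 hd2 hd4
    set R : Subgroup (Perm (Fin 5)) :=
      Subgroup.closure {c₁ * c₂, c₁ * c₃} with hR
    have hg1 : c₁ * c₂ ∈ R := Subgroup.subset_closure (by left; rfl)
    have hg2 : c₁ * c₃ ∈ R := Subgroup.subset_closure (by right; rfl)
    -- cancellation lemmas
    have l1 : ∀ x : Perm (Fin 5), c₁ * (c₁ * x) = x := fun x => by
      rw [← mul_assoc, e1, one_mul]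
    have l2 : ∀ x : Perm (Fin 5), c₂ * (c₂ * x) = x := fun x => by
      rw [← mul_assoc, e2, one_mul]
    have l3 : ∀ x : Perm (Fin 5), c₃ * (c₃ * x) = x := fun x => by
      rw [← mul_assoc, e3, one_mul]
    -- conjugation of generators
    have hconj1 : ∀ x ∈ ({c₁ * c₂, c₁ * c₃} : Set (Perm (Fin 5))),
        c₁ * x * c₁⁻¹ ∈ R := by
      rintro x (rfl | rfl)
      · have e : c₁ * (c₁ * c₂) * c₁⁻¹ = (c₁ * c₂)⁻¹ := by
          simp [mul_inv_rev, i1, i2, mul_assoc, l1, l2, e1, e2]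
        rw [e]; exact inv_mem hg1
      · have e : c₁ * (c₁ * c₃) * c₁⁻¹ = (c₁ * c₃)⁻¹ := by
          simp [mul_inv_rev, i1, i3, mul_assoc, l1, l3, e1, e3]
        rw [e]; exact inv_mem hg2
    have hconj2 : ∀ x ∈ ({c₁ * c₂, c₁ * c₃} : Set (Perm (Fin 5))),
        c₂ * x * c₂⁻¹ ∈ R := by
      rintro x (rfl | rfl)
      · have e : c₂ * (c₁ * c₂) * c₂⁻¹ = (c₁ * c₂)⁻¹ := by
          simp [mul_inv_rev, i1, i2, mul_assoc, l1, l2, e1, e2]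
        rw [e]; exact inv_mem hg1
      · have e : c₂ * (c₁ * c₃) * c₂⁻¹ = (c₁ * c₂)⁻¹ * ((c₁ * c₃)⁻¹ * (c₁ * c₂)) := by
          simp [mul_inv_rev, i1, i2, i3, mul_assoc, l1, l2, l3, e1, e2, e3]
        rw [e]; exact mul_mem (inv_mem hg1) (mul_mem (inv_mem hg2) hg1)
    have hconj3 : ∀ x ∈ ({c₁ * c₂, c₁ * c₃} : Set (Perm (Fin 5))),
        c₃ * x * c₃⁻¹ ∈ R := by
      rintro x (rfl | rfl)
      · have e : c₃ * (c₁ * c₂) * c₃⁻¹ = (c₁ * c₃)⁻¹ * ((c₁ * c₂)⁻¹ * (c₁ * c₃)) := by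
          simp [mul_inv_rev, i1, i2, i3, mul_assoc, l1, l2, l3, e1, e2, e3]
        rw [e]; exact mul_mem (inv_mem hg2) (mul_mem (inv_mem hg1) hg2)
      · have e : c₃ * (c₁ * c₃) * c₃⁻¹ = (c₁ * c₃)⁻¹ := by
          simp [mul_inv_rev, i1, i3, mul_assoc, l1, l3, e1, e3]
        rw [e]; exact inv_mem hg2
    have hN1 : c₁ ∈ Subgroup.normalizer (R : Set _) :=
      mem_normalizer_of_inv e1 (conj_mem_closure c₁ hconj1)
    have hN2 : c₂ ∈ Subgroup.normalizer (R : Set _) :=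
      mem_normalizer_of_inv e2 (conj_mem_closure c₂ hconj2)
    have hN3 : c₃ ∈ Subgroup.normalizer (R : Set _) :=
      mem_normalizer_of_inv e3 (conj_mem_closure c₃ hconj3)
    have hle : Subgroup.closure ({c₁, c₂, c₃, c₄} : Set (Perm (Fin 5))) ≤ Subgroup.normalizer (R : Set _) := by
      rw [Subgroup.closure_le]
      rintro x (rfl | rfl | rfl | rfl)
      · exact hN1
      · exact hN2
      · exact hN3
      · rw [hc4]; exact inv_mem (mul_mem (mul_mem hN1 hN2) hN3)
    set R' : Subgroup (alternatingGroup (Fin 5)) :=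
      R.subgroupOf (alternatingGroup (Fin 5)) with hR'
    have hnormal : R'.Normal := by
      constructor
      intro n hn g
      rw [Subgroup.mem_subgroupOf] at hn ⊢
      have hg : (g : Perm (Fin 5)) ∈ Subgroup.normalizer (R : Set _) := hle (by rw [hgen]; exact g.2)
      exact (Subgroup.mem_normalizer_iff.mp hg (n : Perm (Fin 5))).mp hn
    rcases hnormal.eq_bot_or_eq_top with hbot | htop
    · -- R trivial: all cᵢ equal
      have hb1 : c₁ * c₂ = 1 := by
        have h : (⟨c₁ * c₂, mul_mem m1 m2⟩ : alternatingGroup (Fin 5)) ∈ R' :=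
          Subgroup.mem_subgroupOf.mpr hg1
        rw [hbot, Subgroup.mem_bot] at h
        exact Subtype.ext_iff.mp h
      have hb2 : c₁ * c₃ = 1 := by
        have h : (⟨c₁ * c₃, mul_mem m1 m3⟩ : alternatingGroup (Fin 5)) ∈ R' :=
          Subgroup.mem_subgroupOf.mpr hg2
        rw [hbot, Subgroup.mem_bot] at h
        exact Subtype.ext_iff.mp h
      have hc2 : c₂ = c₁ := by rw [eq_inv_of_mul_eq_one_right hb1, i1]
      have hc3 : c₃ = c₁ := by rw [eq_inv_of_mul_eq_one_right hb2, i1]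
      refine not_abelian (Subgroup.zpowers c₁) ?_ (zpowers_comm c₁)
      rw [← hgen, Subgroup.closure_le]
      rintro x (rfl | rfl | rfl | rfl)
      · exact Subgroup.mem_zpowers _
      · rw [hc2]; exact Subgroup.mem_zpowers _
      · rw [hc3]; exact Subgroup.mem_zpowers _
      · rw [hc4, hc2, hc3]
        exact inv_mem (mul_mem (mul_mem (Subgroup.mem_zpowers _)
          (Subgroup.mem_zpowers _)) (Subgroup.mem_zpowers _))
    · -- R ⊇ A₅ but R is abelian
      have ha5R : alternatingGroup (Fin 5) ≤ R := Subgroup.subgroupOf_eq_top.mp htop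
      refine not_abelian R ha5R ?_
      intro x hx y hy
      induction hx, hy using Subgroup.closure_induction₂ with
      | mem a b ha hb =>
        rcases ha with rfl | rfl <;> rcases hb with rfl | rfl
        · rfl
        · exact hcomm
        · exact hcomm.symm
        · rfl
      | one_left x hx => simp
      | one_right x hx => simp
      | mul_left x y z hx hy hz ihx ihy =>
        rw [mul_assoc, ihy, ← mul_assoc, ihx, mul_assoc]
      | mul_right y z x hy hz hx ihy ihz =>
        rw [← mul_assoc, ihy, mul_assoc, ihz, ← mul_assoc]
      | inv_left x y hx hy ih =>
        exact (Commute.inv_left ih).eq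
      | inv_right x y hx hy ih =>
        exact (Commute.inv_right ih).eq
  · -- two double transpositions and a 5-cycle
    rintro ⟨c₁, c₂, c₃, h1, h2, h3, hp, hgen⟩
    have e1 := sq_of_ct22 h1
    have e2 := sq_of_ct22 h2
    have m1 := memA5_of_ct22 h1
    have m2 := memA5_of_ct22 h2
    have i1 : c₁⁻¹ = c₁ := inv_eq_of_mul_eq_one_left e1
    have i2 : c₂⁻¹ = c₂ := inv_eq_of_mul_eq_one_left e2
    have hc3 : c₃ = (c₁ * c₂)⁻¹ := eq_inv_of_mul_eq_one_right hp
    set r : Perm (Fin 5) := c₁ * c₂ with hr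
    set R : Subgroup (Perm (Fin 5)) := Subgroup.zpowers r with hRdef
    have l1 : ∀ x : Perm (Fin 5), c₁ * (c₁ * x) = x := fun x => by
      rw [← mul_assoc, e1, one_mul]
    have l2 : ∀ x : Perm (Fin 5), c₂ * (c₂ * x) = x := fun x => by
      rw [← mul_assoc, e2, one_mul]
    have hconj : ∀ c : Perm (Fin 5), c * r * c⁻¹ = r⁻¹ → ∀ x ∈ R, c * x * c⁻¹ ∈ R := by
      intro c hcr x hx
      obtain ⟨n, rfl⟩ := hx
      have e : c * r ^ n * c⁻¹ = (c * r * c⁻¹) ^ n := conj_zpow.symm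
      rw [e, hcr]
      exact Subgroup.zpow_mem R (inv_mem (Subgroup.mem_zpowers r)) n
    have hcr1 : c₁ * r * c₁⁻¹ = r⁻¹ := by
      rw [hr]; simp [mul_inv_rev, i1, i2, mul_assoc, l1, l2, e1, e2]
    have hcr2 : c₂ * r * c₂⁻¹ = r⁻¹ := by
      rw [hr]; simp [mul_inv_rev, i1, i2, mul_assoc, l1, l2, e1, e2]
    have hN1 : c₁ ∈ Subgroup.normalizer (R : Set _) := mem_normalizer_of_inv e1 (hconj c₁ hcr1)
    have hN2 : c₂ ∈ Subgroup.normalizer (R : Set _) := mem_normalizer_of_inv e2 (hconj c₂ hcr2)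
    have hN3 : c₃ ∈ Subgroup.normalizer (R : Set _) := by
      refine Subgroup.le_normalizer ?_
      rw [hc3]
      exact inv_mem (Subgroup.mem_zpowers r)
    have hle : Subgroup.closure ({c₁, c₂, c₃} : Set (Perm (Fin 5))) ≤ Subgroup.normalizer (R : Set _) := by
      rw [Subgroup.closure_le]
      rintro x (rfl | rfl | rfl)
      · exact hN1
      · exact hN2
      · exact hN3
    set R' : Subgroup (alternatingGroup (Fin 5)) :=
      R.subgroupOf (alternatingGroup (Fin 5)) with hR'
    have hnormal : R'.Normal := by
      constructor
      intro n hn g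
      rw [Subgroup.mem_subgroupOf] at hn ⊢
      have hg : (g : Perm (Fin 5)) ∈ Subgroup.normalizer (R : Set _) := hle (by rw [hgen]; exact g.2)
      exact (Subgroup.mem_normalizer_iff.mp hg (n : Perm (Fin 5))).mp hn
    rcases hnormal.eq_bot_or_eq_top with hbot | htop
    · have hb1 : r = 1 := by
        have h : (⟨r, mul_mem m1 m2⟩ : alternatingGroup (Fin 5)) ∈ R' :=
          Subgroup.mem_subgroupOf.mpr (Subgroup.mem_zpowers r)
        rw [hbot, Subgroup.mem_bot] at h
        exact Subtype.ext_iff.mp h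
      have : c₃ = 1 := by rw [hc3, hb1, inv_one]
      rw [this, Equiv.Perm.cycleType_one] at h3
      simp at h3
    · have ha5R : alternatingGroup (Fin 5) ≤ R := Subgroup.subgroupOf_eq_top.mp htop
      exact not_abelian R ha5R (zpowers_comm r)
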